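/- Let $X$ and $Z$ be nonempty finite sets, $p_d$ a probability mass function on $X$, $\alpha > 0$ and $\varepsilon > 0$. Let $q(\cdot\mid x)$ and $p(\cdot\mid x)$ be probability mass functions on $Z$ for each $x \in X$ satisfying $q(z\mid x) \ge \alpha$ and $p(z\mid x) \ge \alpha$ for all $x, z$, and suppose the expected KL divergence satisfies $\sum_x p_d(x)\, D_{KL}(q(\cdot\mid x)\,\|\,p(\cdot\mid x)) \le \varepsilon$ ($\varepsilon$-tightness). Then for every $z \in Z$, $\sum_x p_d(x)\,\big(\log q(z\mid x) - \log p(z\mid x)\big)^2 \le 2\varepsilon/\alpha^2$. -/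

import Mathlib

open Real

lemma klterm_lower (a : ℝ) (ha : 0 < a) (ha1 : a ≤ 1) :
    ∀ b, 0 < b → b ≤ 1 → (a - b)^2/2 ≤ a * Real.log (a/b) - a + b := by
  intro b hb hb1
  set f : ℝ → ℝ := fun t => a * Real.log a - a * Real.log t - a + t - (a - t)^2/2 with hf
  have hderiv : ∀ t : ℝ, 0 < t → HasDerivAt f (-(a/t) + 1 + (a - t)) t := by
    intro t ht
    have h1 : HasDerivAt (fun t : ℝ => a * Real.log t) (a / t) t := by
      simpa [mul_comm, div_eq_mul_inv] using (Real.hasDerivAt_log ht.ne').const_mul a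
    have h2 : HasDerivAt (fun t : ℝ => (a - t)^2/2) (-(a - t)) t := by
      have : HasDerivAt (fun t : ℝ => a - t) (-1) t := by
        simpa using ((hasDerivAt_id t).const_sub a)
      exact ((this.pow 2).div_const 2).congr_deriv (by ring)
    have := (((hasDerivAt_const t (a * Real.log a)).sub h1).sub
        (hasDerivAt_const t a)).add (hasDerivAt_id t) |>.sub h2
    exact this.congr_deriv (by ring)
  have hfa : f a = 0 := by simp [hf]
  have key : 0 ≤ f b := by
    rcases le_total a b with hab | hab
    · -- f monotone on [a, b]
      have hmono : MonotoneOn f (Set.Icc a b) := by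
        apply monotoneOn_of_deriv_nonneg (convex_Icc a b)
        · intro t ht
          exact ((hderiv t (lt_of_lt_of_le ha ht.1)).differentiableAt).continuousAt.continuousWithinAt
        · intro t ht
          rw [interior_Icc] at ht
          exact ((hderiv t (lt_of_lt_of_le ha ht.1.le)).differentiableAt).differentiableWithinAt
        · intro t ht
          rw [interior_Icc] at ht
          have htpos : 0 < t := lt_of_lt_of_le ha ht.1.le
          rw [(hderiv t htpos).deriv]
          have h2 : t ≤ 1 := ht.2.le.trans hb1
          have heq : -(a/t) + 1 + (a - t) = (t - a) * (1 - t) / t := by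
            field_simp; ring
          rw [heq]
          exact div_nonneg (mul_nonneg (by linarith [ht.1]) (by linarith)) htpos.le
      have := hmono (Set.left_mem_Icc.2 hab) (Set.right_mem_Icc.2 hab) hab
      rw [hfa] at this; exact this
    · -- f antitone on [b, a]
      have hmono : AntitoneOn f (Set.Icc b a) := by
        apply antitoneOn_of_deriv_nonpos (convex_Icc b a)
        · intro t ht
          exact ((hderiv t (lt_of_lt_of_le hb ht.1)).differentiableAt).continuousAt.continuousWithinAt
        · intro t ht
          rw [interior_Icc] at ht
          exact ((hderiv t (lt_of_lt_of_le hb ht.1.le)).differentiableAt).differentiableWithinAt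
        · intro t ht
          rw [interior_Icc] at ht
          have htpos : 0 < t := lt_of_lt_of_le hb ht.1.le
          rw [(hderiv t htpos).deriv]
          have h2 : t ≤ 1 := ht.2.le.trans ha1
          have heq : -(a/t) + 1 + (a - t) = (t - a) * (1 - t) / t := by
            field_simp; ring
          rw [heq]
          exact div_nonpos_of_nonpos_of_nonneg (mul_nonpos_of_nonpos_of_nonneg (by linarith [ht.2]) (by linarith)) htpos.le
      have := hmono (Set.left_mem_Icc.2 hab) (Set.right_mem_Icc.2 hab) hab
      rw [hfa] at this; exact this
  have hlog : Real.log (a/b) = Real.log a - Real.log b := Real.log_div ha.ne' hb.ne'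
  simp only [hf] at key
  nlinarith [key]
open Real

lemma logdiff_sq_le (α a b : ℝ) (hα : 0 < α) (ha : α ≤ a) (hb : α ≤ b) :
    (Real.log a - Real.log b)^2 ≤ (a - b)^2 / α^2 := by
  have key : ∀ u v : ℝ, α ≤ u → α ≤ v → v ≤ u →
      (Real.log u - Real.log v)^2 ≤ (u - v)^2 / α^2 := by
    intro u v hu hv hvu
    have hv0 : 0 < v := lt_of_lt_of_le hα hv
    have hu0 : 0 < u := lt_of_lt_of_le hα hu
    have h1 : Real.log u - Real.log v = Real.log (u / v) := (Real.log_div hu0.ne' hv0.ne').symm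
    have h2 : Real.log (u / v) ≤ u / v - 1 := Real.log_le_sub_one_of_pos (by positivity)
    have h3 : u / v - 1 = (u - v) / v := by field_simp
    have h4 : (u - v) / v ≤ (u - v) / α := by
      apply div_le_div_of_nonneg_left (by linarith) hα hv
    have h5 : 0 ≤ Real.log (u/v) := Real.log_nonneg ((one_le_div hv0).2 hvu)
    have h6 : Real.log (u/v) ≤ (u - v)/α := by linarith
    rw [h1]
    calc Real.log (u/v)^2 ≤ ((u - v)/α)^2 := pow_le_pow_left₀ h5 h6 2
    _ = (u - v)^2 / α^2 := by rw [div_pow]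
  rcases le_total b a with h | h
  · exact key a b ha hb h
  · have := key b a hb ha h
    calc (Real.log a - Real.log b)^2 = (Real.log b - Real.log a)^2 := by ring
    _ ≤ (b - a)^2/α^2 := this
    _ = (a - b)^2/α^2 := by ring




/-- ε-tightness (expected KL between encoder and posterior ≤ ε), together with
lower bounds `q, p ≥ α`, bounds the expected squared log-ratio by `2ε/α²` for every `z`. -/
theorem stmt_7 {X Z : Type*} [Fintype X] [Fintype Z] [Nonempty X] [Nonempty Z]
    (pd : X → ℝ) (hpd : ∀ x, 0 ≤ pd x) (hpd1 : ∑ x, pd x = 1)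
    (α ε : ℝ) (hα : 0 < α) (hε : 0 < ε)
    (q p : X → Z → ℝ)
    (hq : ∀ x z, α ≤ q x z) (hp : ∀ x z, α ≤ p x z)
    (hq1 : ∀ x, ∑ z, q x z = 1) (hp1 : ∀ x, ∑ z, p x z = 1)
    (htight : ∑ x, pd x * ∑ z, q x z * Real.log (q x z / p x z) ≤ ε) :
    ∀ z, ∑ x, pd x * (Real.log (q x z) - Real.log (p x z)) ^ 2 ≤ 2 * ε / α ^ 2 := by
  intro z0
  have hq0 : ∀ x z, 0 < q x z := fun x z => lt_of_lt_of_le hα (hq x z)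
  have hp0 : ∀ x z, 0 < p x z := fun x z => lt_of_lt_of_le hα (hp x z)
  have hqle1 : ∀ x z, q x z ≤ 1 := by
    intro x z
    rw [← hq1 x]
    exact Finset.single_le_sum (fun i _ => (hq0 x i).le) (Finset.mem_univ z)
  have hple1 : ∀ x z, p x z ≤ 1 := by
    intro x z
    rw [← hp1 x]
    exact Finset.single_le_sum (fun i _ => (hp0 x i).le) (Finset.mem_univ z)
  -- per-x bound: (log ratio at z0)^2 ≤ (2/α²) * KL x
  have hKL : ∀ x, (Real.log (q x z0) - Real.log (p x z0)) ^ 2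
      ≤ 2 / α ^ 2 * ∑ z, q x z * Real.log (q x z / p x z) := by
    intro x
    have hterm : ∀ z, (q x z - p x z)^2/2 ≤ q x z * Real.log (q x z / p x z) - q x z + p x z :=
      fun z => klterm_lower (q x z) (hq0 x z) (hqle1 x z) (p x z) (hp0 x z) (hple1 x z)
    have hsum : ∑ z, (q x z - p x z)^2/2
        ≤ ∑ z, (q x z * Real.log (q x z / p x z) - q x z + p x z) :=
      Finset.sum_le_sum (fun z _ => hterm z)
    have hsum2 : ∑ z, (q x z * Real.log (q x z / p x z) - q x z + p x z)
        = ∑ z, q x z * Real.log (q x z / p x z) := by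
      rw [Finset.sum_add_distrib, Finset.sum_sub_distrib, hq1 x, hp1 x]; ring
    have hone : (q x z0 - p x z0)^2/2 ≤ ∑ z, (q x z - p x z)^2/2 :=
      Finset.single_le_sum (f := fun z => (q x z - p x z)^2/2) (fun i _ => by positivity) (Finset.mem_univ z0)
    have hKLx : (q x z0 - p x z0)^2/2 ≤ ∑ z, q x z * Real.log (q x z / p x z) := by
      rw [← hsum2]; exact hone.trans hsum
    have hlip : (Real.log (q x z0) - Real.log (p x z0)) ^ 2 ≤ (q x z0 - p x z0)^2 / α^2 :=
      logdiff_sq_le α _ _ hα (hq x z0) (hp x z0)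
    have hα2 : (0:ℝ) < α^2 := by positivity
    calc (Real.log (q x z0) - Real.log (p x z0)) ^ 2 ≤ (q x z0 - p x z0)^2 / α^2 := hlip
    _ = 2/α^2 * ((q x z0 - p x z0)^2/2) := by ring
    _ ≤ 2/α^2 * ∑ z, q x z * Real.log (q x z / p x z) := by
        apply mul_le_mul_of_nonneg_left hKLx (by positivity)
  calc ∑ x, pd x * (Real.log (q x z0) - Real.log (p x z0)) ^ 2
      ≤ ∑ x, pd x * (2/α^2 * ∑ z, q x z * Real.log (q x z / p x z)) :=
        Finset.sum_le_sum (fun x _ => mul_le_mul_of_nonneg_left (hKL x) (hpd x))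
    _ = 2/α^2 * ∑ x, pd x * ∑ z, q x z * Real.log (q x z / p x z) := by
        rw [Finset.mul_sum]; congr 1; ext x; ring
    _ ≤ 2/α^2 * ε := mul_le_mul_of_nonneg_left htight (by positivity)
    _ = 2 * ε / α^2 := by ring
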